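/- The superadditivity inequality of relative entropy fails: there exist two-qubit density matrices ρ_AB and σ_AB, with σ_AB positive definite, such that S(ρ_AB‖σ_AB) < S(ρ_A‖σ_A) + S(ρ_B‖σ_B), where subscripts A, B denote partial traces. -/

import Mathlib

open Matrix ComplexOrder

/-- Classical relative entropy with convention `0 * log 0 = 0` (automatic since
`Real.log 0 = 0`). -/
noncomputable def relEnt {d : ℕ} (p q : Fin d → ℝ) : ℝ :=
  ∑ i, p i * (Real.log (p i) - Real.log (q i))

/-- Non-decreasing rearrangement `p↑`. -/
noncomputable def sortAsc {d : ℕ} (p : Fin d → ℝ) : Fin d → ℝ :=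
  p ∘ Tuple.sort p

/-- Non-increasing rearrangement `p↓`. -/
noncomputable def sortDesc {d : ℕ} (p : Fin d → ℝ) : Fin d → ℝ :=
  (p ∘ Tuple.sort p) ∘ Fin.rev
/-- Matrix logarithm of a Hermitian matrix via its spectral decomposition
(junk value `0` on non-Hermitian matrices). -/
noncomputable def matLog {n : Type*} [Fintype n] [DecidableEq n]
    (A : Matrix n n ℂ) : Matrix n n ℂ :=
  if h : A.IsHermitian then
    (h.eigenvectorUnitary : Matrix n n ℂ) *
      Matrix.diagonal (fun i => (Real.log (h.eigenvalues i) : ℂ)) *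
      (star h.eigenvectorUnitary : Matrix n n ℂ)
  else 0

/-- Eigenvalue vector of a Hermitian matrix (junk value `0` otherwise). -/
noncomputable def evals {n : Type*} [Fintype n] [DecidableEq n]
    (A : Matrix n n ℂ) : n → ℝ :=
  if h : A.IsHermitian then h.eigenvalues else 0

/-- Quantum relative entropy `S(ρ‖σ) = Tr (ρ (log ρ − log σ))`. -/
noncomputable def qRelEnt {n : Type*} [Fintype n] [DecidableEq n]
    (ρ σ : Matrix n n ℂ) : ℝ :=
  ((ρ * (matLog ρ - matLog σ)).trace).re

/-- von Neumann entropy `S(ρ) = −Tr (ρ log ρ)`. -/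
noncomputable def vnEnt {n : Type*} [Fintype n] [DecidableEq n]
    (ρ : Matrix n n ℂ) : ℝ :=
  -((ρ * matLog ρ).trace).re

/-- Partial trace over the second (B) factor. -/
noncomputable def ptraceB {a b : ℕ}
    (ρ : Matrix (Fin a × Fin b) (Fin a × Fin b) ℂ) : Matrix (Fin a) (Fin a) ℂ :=
  fun i j => ∑ k, ρ (i, k) (j, k)

/-- Partial trace over the first (A) factor. -/
noncomputable def ptraceA {a b : ℕ}
    (ρ : Matrix (Fin a × Fin b) (Fin a × Fin b) ℂ) : Matrix (Fin b) (Fin b) ℂ :=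
  fun i j => ∑ k, ρ (k, i) (k, j)

/-- Eigenvalues of a matrix on a bipartite space, reindexed by `Fin (a*b)`. -/
noncomputable def evalsP {a b : ℕ}
    (ρ : Matrix (Fin a × Fin b) (Fin a × Fin b) ℂ) : Fin (a * b) → ℝ :=
  evals ρ ∘ finProdFinEquiv.symm


lemma matLog_diagonal {n : Type*} [Fintype n] [DecidableEq n] (d : n → ℝ) :
    matLog (Matrix.diagonal (fun i => (d i : ℂ))) =
      Matrix.diagonal (fun i => (Real.log (d i) : ℂ)) := by
  set A : Matrix n n ℂ := Matrix.diagonal (fun i => (d i : ℂ)) with hAdef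
  have hA : A.IsHermitian :=
    isHermitian_diagonal_of_self_adjoint _ (funext fun i => Complex.conj_ofReal _)
  rw [matLog, dif_pos hA]
  set U : Matrix n n ℂ := (hA.eigenvectorUnitary : Matrix n n ℂ) with hUdef
  have hUU : U * star U = 1 := Matrix.mem_unitaryGroup_iff.mp hA.eigenvectorUnitary.2
  have hUU' : star U * U = 1 := Matrix.mem_unitaryGroup_iff'.mp hA.eigenvectorUnitary.2
  have spec := hA.spectral_theorem
  have hAU : A * U = U * Matrix.diagonal (RCLike.ofReal ∘ hA.eigenvalues) := by
    conv_lhs => rw [spec]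
    rw [Unitary.conjStarAlgAut_apply, ← hUdef]
    rw [mul_assoc, hUU', mul_one]
  have key : ∀ i j, U i j * (Real.log (hA.eigenvalues j) : ℂ)
      = U i j * (Real.log (d i) : ℂ) := by
    intro i j
    by_cases h0 : U i j = 0
    · simp [h0]
    · have h1 : (d i : ℂ) * U i j = U i j * (hA.eigenvalues j : ℂ) := by
        have := congrFun (congrFun hAU i) j
        simpa [Matrix.diagonal_mul, Matrix.mul_diagonal, hAdef] using this
      have h2 : (hA.eigenvalues j : ℂ) = (d i : ℂ) := by
        have := h1
        rw [mul_comm ((d i : ℂ)) (U i j)] at this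
        exact (mul_left_cancel₀ h0 this.symm)
      have h3 : hA.eigenvalues j = d i := by exact_mod_cast h2
      rw [h3]
  ext i k
  rw [Matrix.mul_apply]
  have step : ∀ j, (U * Matrix.diagonal (fun j => (Real.log (hA.eigenvalues j) : ℂ))) i j
      * (star U) j k = (Real.log (d i) : ℂ) * (U i j * (star U) j k) := by
    intro j
    rw [Matrix.mul_diagonal, key i j]
    ring
  rw [Finset.sum_congr rfl (fun j _ => step j), ← Finset.mul_sum, ← Matrix.mul_apply, hUU]
  by_cases h : i = k
  · subst h; simp [Matrix.one_apply, Matrix.diagonal]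
  · simp [Matrix.one_apply, Matrix.diagonal, h]

lemma qRelEnt_diagonal {n : Type*} [Fintype n] [DecidableEq n] (p q : n → ℝ) :
    qRelEnt (Matrix.diagonal (fun i => (p i : ℂ))) (Matrix.diagonal (fun i => (q i : ℂ)))
      = ∑ i, p i * (Real.log (p i) - Real.log (q i)) := by
  rw [qRelEnt, matLog_diagonal, matLog_diagonal, Matrix.diagonal_sub,
    Matrix.diagonal_mul_diagonal, Matrix.trace_diagonal]
  rw [Complex.re_sum]
  congr 1; ext i; simp

theorem stmt_11 :
    ∃ ρ σ : Matrix (Fin 2 × Fin 2) (Fin 2 × Fin 2) ℂ,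
      ρ.PosSemidef ∧ ρ.trace = 1 ∧ σ.PosDef ∧ σ.trace = 1 ∧
      qRelEnt ρ σ <
        qRelEnt (ptraceB ρ) (ptraceB σ) + qRelEnt (ptraceA ρ) (ptraceA σ) := by
  set p : Fin 2 × Fin 2 → ℝ := fun x => if x = (0, 0) then 1 else 0 with hp
  set q : Fin 2 × Fin 2 → ℝ := fun x => if x.1 = x.2 then 3/8 else 1/8 with hq
  set pm : Fin 2 → ℝ := fun i => if i = 0 then 1 else 0 with hpm
  set qm : Fin 2 → ℝ := fun _ => 1/2 with hqm
  refine ⟨Matrix.diagonal (fun i => (p i : ℂ)), Matrix.diagonal (fun i => (q i : ℂ)),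
    ?_, ?_, ?_, ?_, ?_⟩
  · refine Matrix.posSemidef_diagonal_iff.mpr fun i => ?_
    rw [Complex.zero_le_real]
    simp only [hp]; split <;> norm_num
  · rw [Matrix.trace_diagonal]
    rw [show (1 : ℂ) = ((1:ℝ) : ℂ) by norm_num]
    rw [← Complex.ofReal_sum]
    congr 1
    simp [hp, Fintype.sum_prod_type, Fin.sum_univ_two]
  · refine Matrix.posDef_diagonal_iff.mpr fun i => ?_
    rw [show (0:ℂ) = ((0:ℝ):ℂ) by norm_num, Complex.real_lt_real]
    simp only [hq]; split <;> norm_num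
  · rw [Matrix.trace_diagonal]
    rw [show (1 : ℂ) = ((1:ℝ) : ℂ) by norm_num]
    rw [← Complex.ofReal_sum]
    congr 1
    simp [hq, Fintype.sum_prod_type, Fin.sum_univ_two]
    norm_num
  · have hB : ptraceB (Matrix.diagonal (fun i => (p i : ℂ))) =
        Matrix.diagonal (fun i => (pm i : ℂ)) := by
      ext i j
      fin_cases i <;> fin_cases j <;>
        simp [ptraceB, Fin.sum_univ_two, Matrix.diagonal, hp, hpm, Prod.ext_iff]
    have hA' : ptraceA (Matrix.diagonal (fun i => (p i : ℂ))) =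
        Matrix.diagonal (fun i => (pm i : ℂ)) := by
      ext i j
      fin_cases i <;> fin_cases j <;>
        simp [ptraceA, Fin.sum_univ_two, Matrix.diagonal, hp, hpm, Prod.ext_iff]
    have hBq : ptraceB (Matrix.diagonal (fun i => (q i : ℂ))) =
        Matrix.diagonal (fun i => (qm i : ℂ)) := by
      ext i j
      fin_cases i <;> fin_cases j <;>
        simp [ptraceB, Fin.sum_univ_two, Matrix.diagonal, hq, hqm, Prod.ext_iff] <;> norm_num
    have hAq : ptraceA (Matrix.diagonal (fun i => (q i : ℂ))) =
        Matrix.diagonal (fun i => (qm i : ℂ)) := by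
      ext i j
      fin_cases i <;> fin_cases j <;>
        simp [ptraceA, Fin.sum_univ_two, Matrix.diagonal, hq, hqm, Prod.ext_iff] <;> norm_num
    rw [hB, hA', hBq, hAq, qRelEnt_diagonal, qRelEnt_diagonal]
    have lhs_eq : (∑ i, p i * (Real.log (p i) - Real.log (q i))) = - Real.log (3/8) := by
      simp [hp, hq, Fintype.sum_prod_type, Fin.sum_univ_two, Real.log_one]
    have rhs_eq : (∑ i, pm i * (Real.log (pm i) - Real.log (qm i))) = - Real.log (1/2) := by
      simp [hpm, hqm, Fin.sum_univ_two, Real.log_one]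
    rw [lhs_eq, rhs_eq]
    have h1 : -Real.log (3/8) = Real.log (8/3) := by
      rw [← Real.log_inv]; norm_num
    have h2 : -Real.log (1/2) = Real.log 2 := by
      rw [← Real.log_inv]; norm_num
    rw [h1, h2, ← Real.log_mul (by norm_num) (by norm_num)]
    exact Real.log_lt_log (by norm_num) (by norm_num)
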